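/- Let p be an odd prime and let d be the multiplicative order of 2 modulo p. If ζ is a primitive p-th root of unity in an algebraic closure of F_2, then ζ and ζ^{-1} are roots of the same irreducible factor of the p-th cyclotomic polynomial over F_2 if and only if d is even. -/

import Mathlib

open Polynomial

local notation "Ω" => AlgebraicClosure (ZMod 2)

noncomputable def frobAlg : Ω →ₐ[ZMod 2] Ω :=
  { frobenius Ω 2 with
    commutes' := fun r => by
      haveI := Fact.mk Nat.prime_two
      simp [frobenius_def, ← map_pow, ZMod.pow_card] }

lemma frobAlg_apply (x : Ω) : frobAlg x = x ^ 2 := rfl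

lemma frob_root (P : (ZMod 2)[X]) (x : Ω) (h : aeval x P = 0) :
    aeval (x ^ 2) P = 0 := by
  have := Polynomial.aeval_algHom_apply frobAlg x P
  rw [h, map_zero] at this
  rwa [frobAlg_apply] at this

lemma frob_root_iter (P : (ZMod 2)[X]) (x : Ω) (h : aeval x P = 0) (m : ℕ) :
    aeval (x ^ 2 ^ m) P = 0 := by
  induction m with
  | zero => simpa using h
  | succ m ih =>
    have := frob_root P (x ^ 2 ^ m) ih
    rwa [← pow_mul, ← pow_succ] at this

theorem stmt0 (p : ℕ) (hp : p.Prime) (hodd : Odd p)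
    (ζ : AlgebraicClosure (ZMod 2)) (hζ : IsPrimitiveRoot ζ p) :
    minpoly (ZMod 2) ζ = minpoly (ZMod 2) ζ⁻¹ ↔ Even (orderOf (2 : ZMod p)) := by
  haveI := Fact.mk hp
  have hp2 : p ≠ 2 := by
    rintro rfl
    exact (Nat.not_odd_iff_even.mpr even_two) hodd
  have h2ne : (2 : ZMod p) ≠ 0 := by
    have : ¬ ((2 : ℕ) : ZMod p) = 0 := by
      rw [ZMod.natCast_eq_zero_iff]
      intro h
      exact hp2 ((Nat.prime_dvd_prime_iff_eq hp Nat.prime_two).mp h)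
    simpa using this
  have hfin : IsOfFinOrder (2 : ZMod p) :=
    isOfFinOrder_iff_pow_eq_one.mpr
      ⟨p - 1, Nat.sub_pos_of_lt hp.one_lt, ZMod.pow_card_sub_one_eq_one h2ne⟩
  set d := orderOf (2 : ZMod p) with hd
  have hdpos : 0 < d := hfin.orderOf_pos
  have hζ0 : ζ ≠ 0 := hζ.ne_zero hp.ne_zero
  -- p ∣ 2^k + 1 implies ζ^(2^k) = ζ⁻¹
  have key : ∀ k : ℕ, p ∣ 2 ^ k + 1 → ζ ^ 2 ^ k = ζ⁻¹ := by
    intro k hk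
    apply eq_inv_of_mul_eq_one_left
    rw [← pow_succ]
    exact (hζ.pow_eq_one_iff_dvd _).mpr hk
  constructor
  · intro heq
    have hζd : ζ ^ 2 ^ d = ζ := by
      have hdvd1 : p ∣ 2 ^ d - 1 := by
        have : ((2 ^ d - 1 : ℕ) : ZMod p) = 0 := by
          have h2d : (1 : ℕ) ≤ 2 ^ d := Nat.one_le_two_pow
          rw [hd]
          rw [Nat.cast_sub Nat.one_le_two_pow]; push_cast
          linear_combination pow_orderOf_eq_one (2 : ZMod p)
        exact (ZMod.natCast_eq_zero_iff _ _).mp this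
      have h2d : (1 : ℕ) ≤ 2 ^ d := Nat.one_le_two_pow
      calc ζ ^ 2 ^ d = ζ ^ (2 ^ d - 1) * ζ := by
            rw [← pow_succ]; congr 1; omega
        _ = ζ := by rw [(hζ.pow_eq_one_iff_dvd _).mpr hdvd1, one_mul]
    set f : ℕ → (AlgebraicClosure (ZMod 2))[X] := fun k => X - C (ζ ^ 2 ^ k) with hf
    set Q : (AlgebraicClosure (ZMod 2))[X] := ∏ k ∈ Finset.range d, f k with hQ
    have hmapQ : Q.map (frobAlg : AlgebraicClosure (ZMod 2) →+* AlgebraicClosure (ZMod 2)) = Q := by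
      rw [hQ, Polynomial.map_prod]
      have hterm : ∀ k, (f k).map
          (frobAlg : AlgebraicClosure (ZMod 2) →+* AlgebraicClosure (ZMod 2)) = f (k + 1) := by
        intro k
        rw [hf]
        simp only [Polynomial.map_sub, Polynomial.map_X, Polynomial.map_C]
        congr 2
        show (ζ ^ 2 ^ k) ^ 2 = ζ ^ 2 ^ (k + 1)
        rw [← pow_mul, ← pow_succ]
      simp only [hterm]
      have hcancel : (∏ k ∈ Finset.range d, f (k + 1)) * f 0 =
          (∏ k ∈ Finset.range d, f k) * f 0 := by
        rw [← Finset.prod_range_succ', Finset.prod_range_succ]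
        congr 1
        rw [hf]
        simp only []
        rw [hζd]
        norm_num
      exact mul_right_cancel₀ (by rw [hf]; exact X_sub_C_ne_zero _) hcancel
    have hQlift : Q ∈ Polynomial.lifts (algebraMap (ZMod 2) (AlgebraicClosure (ZMod 2))) := by
      rw [Polynomial.lifts_iff_coeff_lifts]
      intro n
      have hc : (Q.coeff n) ^ 2 = Q.coeff n := by
        conv_rhs => rw [← hmapQ]
        rw [Polynomial.coeff_map]
        rfl
      have : Q.coeff n * (Q.coeff n - 1) = 0 := by
        have := hc; ring_nf; ring_nf at this; linear_combination this
      rcases mul_eq_zero.mp this with h | h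
      · exact ⟨0, by simpa using h.symm⟩
      · exact ⟨1, by rw [map_one]; linear_combination -h⟩
    obtain ⟨R, hR⟩ := (Polynomial.mem_lifts _).mp hQlift
    have hevalQ : eval ζ Q = 0 := by
      rw [hQ, Polynomial.eval_prod]
      apply Finset.prod_eq_zero (Finset.mem_range.mpr hdpos)
      simp [hf]
    have haevalR : aeval ζ R = 0 := by
      rw [aeval_def, ← Polynomial.eval_map, hR]; exact hevalQ
    have hdvdR := minpoly.dvd (ZMod 2) ζ haevalR
    have haeval_inv : aeval ζ⁻¹ R = 0 := by
      obtain ⟨S, hS⟩ := hdvdR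
      rw [hS, map_mul]
      have : aeval ζ⁻¹ (minpoly (ZMod 2) ζ) = 0 := by
        rw [heq]; exact minpoly.aeval _ _
      rw [this, zero_mul]
    have hevalQ_inv : eval ζ⁻¹ Q = 0 := by
      rw [← hR, Polynomial.eval_map, ← aeval_def]; exact haeval_inv
    rw [hQ, Polynomial.eval_prod, Finset.prod_eq_zero_iff] at hevalQ_inv
    obtain ⟨k, _, hzero⟩ := hevalQ_inv
    have hinv : ζ⁻¹ = ζ ^ 2 ^ k := by
      rw [hf] at hzero
      simp only [eval_sub, eval_X, eval_C] at hzero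
      linear_combination hzero
    have hdvdp : p ∣ 2 ^ k + 1 := by
      rw [← hζ.pow_eq_one_iff_dvd, pow_succ, ← hinv, inv_mul_cancel₀ hζ0]
    have hneg : (2 : ZMod p) ^ k = -1 := by
      have h0 : ((2 ^ k + 1 : ℕ) : ZMod p) = 0 :=
        (ZMod.natCast_eq_zero_iff _ _).mpr hdvdp
      push_cast at h0
      linear_combination h0
    have h2ord : orderOf (-1 : ZMod p) = 2 := by
      rw [orderOf_neg_one, if_neg]
      rw [ZMod.ringChar_zmod_n]; exact hp2
    rw [even_iff_two_dvd]
    calc (2 : ℕ) = orderOf (-1 : ZMod p) := h2ord.symm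
      _ = orderOf ((2 : ZMod p) ^ k) := by rw [hneg]
      _ ∣ d := orderOf_pow_dvd k
  · intro heven
    obtain ⟨m, hm⟩ := heven
    have hmpos : 0 < m := by omega
    have hx : (2 : ZMod p) ^ m * (2 : ZMod p) ^ m = 1 := by
      rw [← pow_add, ← hm]
      exact pow_orderOf_eq_one _
    have hxne : (2 : ZMod p) ^ m ≠ 1 := by
      intro h1
      have := Nat.le_of_dvd hmpos (orderOf_dvd_of_pow_eq_one h1)
      omega
    have hneg : (2 : ZMod p) ^ m = -1 := by
      rcases mul_self_eq_one_iff.mp hx with h | h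
      · exact absurd h hxne
      · exact h
    have hdvdp : p ∣ 2 ^ m + 1 := by
      apply (ZMod.natCast_eq_zero_iff _ _).mp
      push_cast
      rw [hneg]; ring
    have hroot : ζ ^ 2 ^ m = ζ⁻¹ := key m hdvdp
    have hint : IsIntegral (ZMod 2) ζ := Algebra.IsIntegral.isIntegral ζ
    have h0 : aeval (ζ ^ 2 ^ m) (minpoly (ZMod 2) ζ) = 0 :=
      frob_root_iter _ _ (minpoly.aeval _ _) m
    rw [hroot] at h0
    have := minpoly.eq_of_irreducible_of_monic (minpoly.irreducible hint) h0
      (minpoly.monic hint)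
    exact this
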